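/- arXiv:1901.03797 — 2 statements merged into one kernel-verified Lean document; each statement's English description precedes it below -/
import Mathlib

section
/- Suppose y = X_a β_a + X_m β_m + ε with ε mean-zero and independent of covariates. Then for any l in the index set of missing covariates, E[E(X_l | X_J) (y - X_a β_a - E(X_m | X_J) β_m)] = 0. -/
open MeasureTheory ProbabilityTheory

lemma memLp_two_condexp_aux {Ω : Type*} {m mΩ : MeasurableSpace Ω} (hm : m ≤ mΩ)
    (μ : Measure Ω) [IsFiniteMeasure μ] {g : Ω → ℝ} (hg : MemLp g 2 μ) :
    MemLp (μ[g|m]) 2 μ := by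
  haveI : SigmaFinite (μ.trim hm) := inferInstance
  set G := condExpL2 ℝ ℝ hm (hg.toLp g) with hG
  have hae : (G : Ω → ℝ) =ᵐ[μ] μ[g|m] := by
    refine ae_eq_condExp_of_forall_setIntegral_eq hm (hg.integrable one_le_two)
      (fun s hs hμs => ((Lp.memLp (G : Lp ℝ 2 μ)).integrable one_le_two).integrableOn)
      (fun s hs hμs => ?_) (lpMeas.aestronglyMeasurable G)
    rw [integral_condExpL2_eq hm (hg.toLp g) hs hμs.ne]
    exact integral_congr_ae (ae_restrict_of_ae hg.coeFn_toLp)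
  exact (Lp.memLp (G : Lp ℝ 2 μ)).ae_eq hae

lemma integrable_mul_of_memLp_two_aux {Ω : Type*} {mΩ : MeasurableSpace Ω}
    {μ : Measure Ω} {f g : Ω → ℝ} (hf : MemLp f 2 μ) (hg : MemLp g 2 μ) :
    Integrable (fun ω => f ω * g ω) μ := by
  have h := hg.smul (φ := f) (r := 1) (hpqr := ⟨by norm_num [ENNReal.inv_two_add_inv_two]⟩) hf
  rw [memLp_one_iff_integrable] at h
  simpa [smul_eq_mul, Pi.mul_def] using h

/-- If `y = X_a β_a + X_m β_m + ε` with `ε` mean-zero and independent of the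
covariates, then for any index `l` of a missing covariate,
`E[E(X_l | X_J) (y - X_a β_a - E(X_m | X_J) β_m)] = 0`. -/
theorem estimating_function_unbiased_imputed
    {Ω : Type*} {mΩ : MeasurableSpace Ω} (μ : Measure Ω) [IsProbabilityMeasure μ]
    {pa pm : ℕ} (Xa : Ω → (Fin pa → ℝ)) (Xm : Ω → (Fin pm → ℝ)) (ε : Ω → ℝ)
    (hXa : Measurable Xa) (hXm : Measurable Xm) (hε : Measurable ε)
    (hXaL2 : ∀ i, MemLp (fun ω => Xa ω i) 2 μ)
    (hXmL2 : ∀ i, MemLp (fun ω => Xm ω i) 2 μ)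
    (hεL2 : MemLp ε 2 μ)
    (hεmean : ∫ ω, ε ω ∂μ = 0)
    (hindep : IndepFun ε (fun ω => (Xa ω, Xm ω)) μ)
    (βa : Fin pa → ℝ) (βm : Fin pm → ℝ)
    (y : Ω → ℝ)
    (hy : ∀ ω, y ω = (∑ i, Xa ω i * βa i) + (∑ i, Xm ω i * βm i) + ε ω)
    (J : Finset (Fin pa)) (l : Fin pm)
    (m : MeasurableSpace Ω)
    (hm_def : m = MeasurableSpace.comap (fun ω => (fun i : J => Xa ω (i : Fin pa))) inferInstance)
    (hm : m ≤ mΩ) :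
    ∫ ω, (μ[(fun ω' => Xm ω' l) | m]) ω *
      (y ω - (∑ i, Xa ω i * βa i)
        - (∑ i, (μ[(fun ω' => Xm ω' i) | m]) ω * βm i)) ∂μ = 0 := by
  haveI hsf : SigmaFinite (μ.trim hm) := inferInstance
  set f := μ[(fun ω' => Xm ω' l) | m] with hf_def
  set g : Fin pm → Ω → ℝ := fun i => μ[(fun ω' => Xm ω' i) | m] with hg_def
  have hfmeas : StronglyMeasurable[m] f := stronglyMeasurable_condExp
  have hfL2 : MemLp f 2 μ := memLp_two_condexp_aux hm μ (hXmL2 l)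
  have hgL2 : ∀ i, MemLp (g i) 2 μ := fun i => memLp_two_condexp_aux hm μ (hXmL2 i)
  have intfXm : ∀ i, Integrable (fun ω => f ω * Xm ω i) μ :=
    fun i => integrable_mul_of_memLp_two_aux hfL2 (hXmL2 i)
  have intfg : ∀ i, Integrable (fun ω => f ω * g i ω) μ :=
    fun i => integrable_mul_of_memLp_two_aux hfL2 (hgL2 i)
  have intfε : Integrable (fun ω => f ω * ε ω) μ :=
    integrable_mul_of_memLp_two_aux hfL2 hεL2
  -- Step 1: ∫ f * Xm_i = ∫ f * g i
  have step1 : ∀ i, ∫ ω, f ω * Xm ω i ∂μ = ∫ ω, f ω * g i ω ∂μ := by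
    intro i
    have h1 : μ[(f * fun ω' => Xm ω' i) | m] =ᵐ[μ] f * μ[(fun ω' => Xm ω' i) | m] :=
      condExp_mul_of_stronglyMeasurable_left hfmeas (intfXm i) ((hXmL2 i).integrable one_le_two)
    calc ∫ ω, f ω * Xm ω i ∂μ
        = ∫ ω, (μ[(f * fun ω' => Xm ω' i) | m]) ω ∂μ := (integral_condExp hm).symm
      _ = ∫ ω, (f * μ[(fun ω' => Xm ω' i) | m]) ω ∂μ := integral_congr_ae h1
      _ = ∫ ω, f ω * g i ω ∂μ := rfl
  -- Step 2: ∫ f * ε = 0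
  have step2 : ∫ ω, f ω * ε ω ∂μ = 0 := by
    have h1 : MeasurableSpace.comap f inferInstance ≤ m := hfmeas.measurable.comap_le
    have h2 : m ≤ MeasurableSpace.comap (fun ω => (Xa ω, Xm ω)) inferInstance := by
      rw [hm_def]
      have heq : (fun ω => (fun i : J => Xa ω (i : Fin pa)))
          = (fun p : (Fin pa → ℝ) × (Fin pm → ℝ) => (fun i : J => p.1 (i : Fin pa)))
            ∘ (fun ω => (Xa ω, Xm ω)) := rfl
      calc MeasurableSpace.comap (fun ω => (fun i : J => Xa ω (i : Fin pa))) inferInstance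
          = MeasurableSpace.comap (fun ω => (Xa ω, Xm ω))
              (MeasurableSpace.comap
                (fun p : (Fin pa → ℝ) × (Fin pm → ℝ) => (fun i : J => p.1 (i : Fin pa)))
                inferInstance) := by
            rw [heq, MeasurableSpace.comap_comp]
        _ ≤ MeasurableSpace.comap (fun ω => (Xa ω, Xm ω)) inferInstance :=
            MeasurableSpace.comap_mono
              (Measurable.comap_le (measurable_pi_lambda _
                fun i => (measurable_pi_apply _).comp measurable_fst))
    have hεf : IndepFun ε f μ := indep_of_indep_of_le_right hindep (h1.trans h2)
    have := hεf.symm.integral_fun_mul_eq_mul_integral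
      (stronglyMeasurable_condExp.mono hm).aestronglyMeasurable hε.aestronglyMeasurable
    rw [this, hεmean, mul_zero]
  -- pointwise rewrite
  have hpt : ∀ ω, f ω * (y ω - (∑ i, Xa ω i * βa i) - (∑ i, g i ω * βm i))
      = (∑ i, (f ω * Xm ω i - f ω * g i ω) * βm i) + f ω * ε ω := by
    intro ω
    rw [hy ω]
    have : (∑ i, Xa ω i * βa i) + (∑ i, Xm ω i * βm i) + ε ω - (∑ i, Xa ω i * βa i)
        - (∑ i, g i ω * βm i)
        = (∑ i, (Xm ω i * βm i - g i ω * βm i)) + ε ω := by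
      rw [Finset.sum_sub_distrib]; ring
    rw [this, mul_add, Finset.mul_sum]
    congr 1
    exact Finset.sum_congr rfl fun i _ => by ring
  rw [integral_congr_ae (Filter.Eventually.of_forall hpt)]
  have intsum : Integrable (fun ω => ∑ i, (f ω * Xm ω i - f ω * g i ω) * βm i) μ :=
    integrable_finset_sum _ fun i _ => (((intfXm i).sub (intfg i)).mul_const _)
  have intsub : ∀ i, Integrable (fun ω => (f ω * Xm ω i - f ω * g i ω) * βm i) μ :=
    fun i => ((intfXm i).sub (intfg i)).mul_const _
  rw [integral_add intsum intfε, step2, add_zero,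
    integral_finset_sum _ fun i _ => intsub i]
  refine Finset.sum_eq_zero fun i _ => ?_
  rw [integral_mul_const _ _, integral_sub (intfXm i) (intfg i), step1 i, sub_self, zero_mul]
end

section
/- Let V1 be a symmetric positive definite k×k matrix and V2 a q×k matrix of rank q (q ≤ k). Let U be an s×k matrix (s ≤ k) such that U V1 Uᵀ is invertible and V2 Uᵀ has rank q. Then (V2 Uᵀ (U V1 Uᵀ)^{-1} U V2ᵀ)^{-1} − (V2 V1^{-1} V2ᵀ)^{-1} is positive semi-definite; that is, using a subset (linear transformation) of estimating functions yields an asymptotic variance at least as large as using all of them. -/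
open Matrix

private lemma psd_posDef_of_isUnit_det {n : ℕ} {M : Matrix (Fin n) (Fin n) ℝ}
    (hM : M.PosSemidef) (h : IsUnit M.det) : M.PosDef := by
  refine Matrix.posDef_iff_dotProduct_mulVec.mpr ⟨hM.1, fun x hx => lt_of_le_of_ne (hM.dotProduct_mulVec_nonneg x) ?_⟩
  intro h0
  have hMx : M *ᵥ x = 0 := (hM.dotProduct_mulVec_zero_iff x).mp h0.symm
  have hinj : Function.Injective M.mulVec := Matrix.mulVec_injective_iff_isUnit.mpr
    ((Matrix.isUnit_iff_isUnit_det _).mpr h)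
  exact hx (hinj (by simp [hMx]))

private lemma transpose_mulVec_injective {q k : ℕ} (B : Matrix (Fin q) (Fin k) ℝ)
    (h : B.rank = q) : Function.Injective (Bᵀ.mulVec) := by
  have hr : Bᵀ.rank = q := by rw [Matrix.rank_transpose, h]
  have h1 := LinearMap.finrank_range_add_finrank_ker (Bᵀ).mulVecLin
  rw [show (Module.finrank ℝ (LinearMap.range Bᵀ.mulVecLin)) = Bᵀ.rank from rfl, hr,
    Module.finrank_fin_fun] at h1
  have hker : Module.finrank ℝ (LinearMap.ker Bᵀ.mulVecLin) = 0 := by omega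
  have : LinearMap.ker Bᵀ.mulVecLin = ⊥ := Submodule.finrank_eq_zero.mp hker
  have := LinearMap.ker_eq_bot.mp this
  exact this

/-- Conjugation of a positive definite matrix by a full-row-rank matrix is positive definite. -/
private lemma posDef_conj_of_rank {q k : ℕ} {M : Matrix (Fin k) (Fin k) ℝ} (hM : M.PosDef)
    (B : Matrix (Fin q) (Fin k) ℝ) (h : B.rank = q) : (B * M * Bᵀ).PosDef := by
  have hsymm : (B * M * Bᵀ).IsHermitian := by
    have := hM.1
    unfold Matrix.IsHermitian at *
    simp only [Matrix.conjTranspose_eq_transpose_of_trivial] at *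
    rw [Matrix.transpose_mul, Matrix.transpose_mul, Matrix.transpose_transpose, this,
      Matrix.mul_assoc]
  refine Matrix.posDef_iff_dotProduct_mulVec.mpr ⟨hsymm, fun x hx => ?_⟩
  have hy : Bᵀ *ᵥ x ≠ 0 := by
    intro h0
    exact hx (transpose_mulVec_injective B h (by simp [h0]))
  have := hM.dotProduct_mulVec_pos hy
  have hrw : star x ⬝ᵥ (B * M * Bᵀ) *ᵥ x = star (Bᵀ *ᵥ x) ⬝ᵥ M *ᵥ (Bᵀ *ᵥ x) := by
    simp only [star_trivial, ← Matrix.mulVec_mulVec]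
    rw [Matrix.dotProduct_mulVec, ← Matrix.mulVec_transpose]
  rwa [hrw]

/-- Proposition 1, matrix form: for `V1` symmetric positive definite,
`V2` of full row rank `q`, and `U` a transformation such that `U V1 Uᵀ` is invertible and
`V2 Uᵀ` has rank `q`, the difference
`(V2 Uᵀ (U V1 Uᵀ)⁻¹ U V2ᵀ)⁻¹ − (V2 V1⁻¹ V2ᵀ)⁻¹` is positive semi-definite. -/
theorem subset_estimating_functions_variance_ge
    {k q s : ℕ} (hqk : q ≤ k) (hsk : s ≤ k)
    (V1 : Matrix (Fin k) (Fin k) ℝ) (hV1 : V1.PosDef)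
    (V2 : Matrix (Fin q) (Fin k) ℝ) (hV2rank : V2.rank = q)
    (U : Matrix (Fin s) (Fin k) ℝ)
    (hU : IsUnit (U * V1 * Uᵀ).det)
    (hV2U : (V2 * Uᵀ).rank = q) :
    ((V2 * Uᵀ * (U * V1 * Uᵀ)⁻¹ * U * V2ᵀ)⁻¹ - (V2 * V1⁻¹ * V2ᵀ)⁻¹).PosSemidef := by
  have hV1inv : V1⁻¹.PosDef := hV1.inv
  -- S := U * V1 * Uᵀ is positive definite
  have hSpsd : (U * V1 * Uᵀ).PosSemidef := by
    have := hV1.posSemidef.mul_mul_conjTranspose_same U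
    simpa [Matrix.conjTranspose_eq_transpose_of_trivial] using this
  have hS : (U * V1 * Uᵀ).PosDef := psd_posDef_of_isUnit_det hSpsd hU
  have hSinv : (U * V1 * Uᵀ)⁻¹.PosDef := hS.inv
  -- A := V2 * V1⁻¹ * V2ᵀ is positive definite
  have hA : (V2 * V1⁻¹ * V2ᵀ).PosDef := posDef_conj_of_rank hV1inv V2 hV2rank
  -- B := V2 Uᵀ S⁻¹ U V2ᵀ is positive definite
  have hB : (V2 * Uᵀ * (U * V1 * Uᵀ)⁻¹ * U * V2ᵀ).PosDef := by
    have := posDef_conj_of_rank hSinv (V2 * Uᵀ) hV2U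
    rw [Matrix.transpose_mul, Matrix.transpose_transpose] at this
    simpa [Matrix.mul_assoc] using this
  set A := V2 * V1⁻¹ * V2ᵀ with hAdef
  set B := V2 * Uᵀ * (U * V1 * Uᵀ)⁻¹ * U * V2ᵀ with hBdef
  haveI : Invertible V1 := hV1.isUnit.invertible
  haveI : Invertible V1⁻¹ := hV1inv.isUnit.invertible
  haveI : Invertible (U * V1 * Uᵀ) := hS.isUnit.invertible
  haveI : Invertible A := hA.isUnit.invertible
  haveI : Invertible B := hB.isUnit.invertible
  haveI : Invertible B⁻¹ := hB.inv.isUnit.invertible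
  -- Step 1: C := V1⁻¹ - Uᵀ S⁻¹ U is PSD via Schur complements
  have hC : (V1⁻¹ - Uᵀ * (U * V1 * Uᵀ)⁻¹ * U).PosSemidef := by
    have hUH : (U : Matrix (Fin s) (Fin k) ℝ)ᴴ = Uᵀ :=
      Matrix.conjTranspose_eq_transpose_of_trivial U
    have hblock : (Matrix.fromBlocks (U * V1 * Uᵀ) U Uᴴ V1⁻¹).PosSemidef := by
      rw [Matrix.PosDef.fromBlocks₂₂ _ _ hV1inv]
      have : U * (V1⁻¹)⁻¹ * Uᴴ = U * V1 * Uᵀ := by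
        rw [hUH, Matrix.inv_inv_of_invertible]
      rw [this, sub_self]
      exact Matrix.PosSemidef.zero
    rw [Matrix.PosDef.fromBlocks₁₁ _ _ hS, hUH] at hblock
    exact hblock
  -- Step 2: A - B is PSD
  have hAB : (A - B).PosSemidef := by
    have key : A - B = V2 * (V1⁻¹ - Uᵀ * (U * V1 * Uᵀ)⁻¹ * U) * V2ᵀ := by
      rw [Matrix.mul_sub, Matrix.sub_mul, hAdef, hBdef]
      simp [Matrix.mul_assoc]
    rw [key]
    have := hC.mul_mul_conjTranspose_same V2
    simpa [Matrix.conjTranspose_eq_transpose_of_trivial] using this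
  -- Step 3: B⁻¹ - A⁻¹ is PSD via Schur complements on [[A, 1],[1, B⁻¹]]
  have h1H : (1 : Matrix (Fin q) (Fin q) ℝ)ᴴ = 1 := by simp
  have hblock2 : (Matrix.fromBlocks A (1 : Matrix (Fin q) (Fin q) ℝ)
      (1 : Matrix (Fin q) (Fin q) ℝ)ᴴ B⁻¹).PosSemidef := by
    rw [Matrix.PosDef.fromBlocks₂₂ _ _ hB.inv]
    rw [h1H, Matrix.inv_inv_of_invertible, Matrix.one_mul, Matrix.mul_one]
    exact hAB
  rw [Matrix.PosDef.fromBlocks₁₁ _ _ hA, h1H, Matrix.one_mul, Matrix.mul_one] at hblock2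
  exact hblock2
end
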